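/- Let R ∈ ℝ and set R_KEP = ((12 + 8√21)/125) · √(30 − 5√21). Then every complex root of the polynomial X⁵ − 4X³ + 3X − R is real if and only if |R| ≤ R_KEP. -/

import Mathlib

open Real Set Polynomial

noncomputable def KEPs : ℝ := Real.sqrt 21
noncomputable def KEPa : ℝ := Real.sqrt ((6 - KEPs)/5)
noncomputable def KEPb : ℝ := Real.sqrt ((6 + KEPs)/5)
noncomputable def KEPf : ℝ → ℝ := fun x => x^5 - 4*x^3 + 3*x




lemma KEPs_sq : KEPs^2 = 21 := Real.sq_sqrt (by norm_num)
lemma KEPs_nonneg : 0 ≤ KEPs := Real.sqrt_nonneg _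
lemma KEPs_gt : 4.58 < KEPs := by
  nlinarith [KEPs_sq, KEPs_nonneg]
lemma KEPs_lt : KEPs < 4.59 := by
  nlinarith [KEPs_sq, KEPs_nonneg]

lemma KEPa_sq : KEPa^2 = (6 - KEPs)/5 :=
  Real.sq_sqrt (by nlinarith [KEPs_lt])
lemma KEPa_nonneg : 0 ≤ KEPa := Real.sqrt_nonneg _
lemma KEPa_gt : 0.531 < KEPa := by
  nlinarith [KEPa_sq, KEPa_nonneg, KEPs_lt]
lemma KEPa_lt : KEPa < 0.533 := by
  nlinarith [KEPa_sq, KEPa_nonneg, KEPs_gt]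

lemma KEPb_sq : KEPb^2 = (6 + KEPs)/5 :=
  Real.sq_sqrt (by nlinarith [KEPs_gt])
lemma KEPb_nonneg : 0 ≤ KEPb := Real.sqrt_nonneg _
lemma KEPb_gt : 1.454 < KEPb := by
  nlinarith [KEPb_sq, KEPb_nonneg, KEPs_gt]
lemma KEPb_lt : KEPb < 1.456 := by
  nlinarith [KEPb_sq, KEPb_nonneg, KEPs_lt]

/-- the R_KEP constant in terms of KEPa -/
lemma RKEP_eq : ((12 + 8 * Real.sqrt 21) / 125) * Real.sqrt (30 - 5 * Real.sqrt 21)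
    = (12 + 8*KEPs)*KEPa/25 := by
  have h : Real.sqrt (30 - 5 * Real.sqrt 21) = 5 * KEPa := by
    rw [show (30 - 5*Real.sqrt 21 : ℝ) = (5*KEPa)^2 by
      have := KEPa_sq; show (30 - 5*KEPs : ℝ) = _; nlinarith]
    exact Real.sqrt_sq (by nlinarith [KEPa_nonneg])
  rw [h, KEPs]; ring

lemma fa_eq_raw : KEPa^5 - 4*KEPa^3 + 3*KEPa = (12 + 8*KEPs)*KEPa/25 := by
  linear_combination (KEPa^3 + ((6-KEPs)/5 - 4)*KEPa) * KEPa_sq + (KEPa/25) * KEPs_sq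

lemma fb_eq_raw : KEPb^5 - 4*KEPb^3 + 3*KEPb = (12 - 8*KEPs)*KEPb/25 := by
  linear_combination (KEPb^3 + ((6+KEPs)/5 - 4)*KEPb) * KEPb_sq + (KEPb/25) * KEPs_sq

lemma RK_pos : 0 < (12 + 8*KEPs)*KEPa/25 := by nlinarith [KEPs_gt, KEPa_gt]
lemma RK_lt2 : (12 + 8*KEPs)*KEPa/25 < 2 := by nlinarith [KEPs_lt, KEPa_lt, KEPs_gt, KEPa_gt]
lemma M_gt : (12 + 8*KEPs)*KEPa/25 < (8*KEPs - 12)*KEPb/25 := by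
  nlinarith [KEPs_gt, KEPs_lt, KEPa_gt, KEPa_lt, KEPb_gt, KEPb_lt]

lemma KEPa_quartic : 5*KEPa^4 - 12*KEPa^2 + 3 = 0 := by
  nlinarith [KEPa_sq, KEPs_sq]

lemma KEPb_quartic : 5*KEPb^4 - 12*KEPb^2 + 3 = 0 := by
  nlinarith [KEPb_sq, KEPs_sq]

/-- key bound: f ≤ f(a) on [-a, b] -/
lemma f_bound {x : ℝ} (h1 : -KEPa ≤ x) (h2 : x ≤ KEPb) :
    x^5 - 4*x^3 + 3*x ≤ (12 + 8*KEPs)*KEPa/25 := by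
  rw [← fa_eq_raw]
  have hx1 : -0.533 ≤ x := by linarith [KEPa_lt]
  have hx2 : x ≤ 1.456 := by linarith [KEPb_lt]
  have hcub : 0 ≤ -x^3 - 2*KEPa*x^2 - (3*KEPa^2-4)*x - 4*KEPa^3 + 8*KEPa := by
    nlinarith [KEPa_gt, KEPa_lt, mul_nonneg (by linarith : (0:ℝ) ≤ x + 0.533) (by linarith : (0:ℝ) ≤ 1.456 - x),
      mul_nonneg (mul_nonneg (by linarith : (0:ℝ) ≤ x + 0.533) (by linarith : (0:ℝ) ≤ 1.456 - x)) (by linarith : (0:ℝ) ≤ 1.456 - x),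
      mul_nonneg (mul_nonneg (by linarith : (0:ℝ) ≤ x + 0.533) (by linarith : (0:ℝ) ≤ 1.456 - x)) (by linarith : (0:ℝ) ≤ x + 0.533),
      sq_nonneg (KEPa - 0.532), sq_nonneg x]
  have key : KEPa^5 - 4*KEPa^3 + 3*KEPa - (x^5 - 4*x^3 + 3*x)
      = (x - KEPa)^2 * (-x^3 - 2*KEPa*x^2 - (3*KEPa^2-4)*x - 4*KEPa^3 + 8*KEPa)
        + (5*KEPa^4 - 12*KEPa^2 + 3)*(KEPa - x) := by ring
  nlinarith [mul_nonneg (sq_nonneg (x - KEPa)) hcub, KEPa_quartic, key]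


lemma fa_eq : KEPf KEPa = (12 + 8*KEPs)*KEPa/25 := by
  unfold KEPf; exact fa_eq_raw

lemma fb_eq : KEPf KEPb = (12 - 8*KEPs)*KEPb/25 := by
  unfold KEPf; exact fb_eq_raw

lemma f_bound' {x : ℝ} (h1 : -KEPa ≤ x) (h2 : x ≤ KEPb) :
    KEPf x ≤ (12 + 8*KEPs)*KEPa/25 := by
  unfold KEPf; exact f_bound h1 h2



lemma KEPf_hasDeriv (x : ℝ) : HasDerivAt KEPf (5*x^4 - 12*x^2 + 3) x := by
  have h1 : HasDerivAt (fun x : ℝ => x^5) (5*x^4) x := by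
    simpa using hasDerivAt_pow 5 x
  have h2 : HasDerivAt (fun x : ℝ => 4*x^3) (4*(3*x^2)) x := by
    simpa using (hasDerivAt_pow 3 x).const_mul 4
  have h3 : HasDerivAt (fun x : ℝ => 3*x) 3 x := by
    simpa using (hasDerivAt_id x).const_mul 3
  have := (h1.sub h2).add h3
  exact this.congr_deriv (by ring)

lemma KEPf_cont : Continuous KEPf := by unfold KEPf; continuity

lemma KEPderiv_factor (x : ℝ) :
    5*x^4 - 12*x^2 + 3 = 5*(x^2 - KEPa^2)*(x^2 - KEPb^2) := by
  rw [KEPa_sq, KEPb_sq]; linear_combination (1/5) * KEPs_sq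

lemma KEP_mono_left : StrictMonoOn KEPf (Iic (-KEPb)) := by
  apply strictMonoOn_of_deriv_pos (convex_Iic _) KEPf_cont.continuousOn
  intro x hx
  rw [interior_Iic, mem_Iio] at hx
  rw [(KEPf_hasDeriv x).deriv, KEPderiv_factor]
  have hb2 : KEPb^2 < x^2 := by nlinarith [KEPb_gt]
  have ha2 : KEPa^2 < KEPb^2 := by rw [KEPa_sq, KEPb_sq]; linarith [KEPs_gt]
  have : (0:ℝ) < x^2 - KEPa^2 := by nlinarith
  nlinarith

lemma KEP_anti_mid : StrictAntiOn KEPf (Icc (-KEPb) (-KEPa)) := by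
  apply strictAntiOn_of_deriv_neg (convex_Icc _ _) KEPf_cont.continuousOn
  intro x hx
  rw [interior_Icc, mem_Ioo] at hx
  rw [(KEPf_hasDeriv x).deriv, KEPderiv_factor]
  have h1 : KEPa^2 < x^2 := by nlinarith [KEPa_gt, KEPb_gt, hx.1, hx.2]
  have h2 : x^2 < KEPb^2 := by nlinarith [KEPa_gt, KEPb_gt, hx.1, hx.2]
  nlinarith

lemma KEP_mono_right : StrictMonoOn KEPf (Ici KEPb) := by
  apply strictMonoOn_of_deriv_pos (convex_Ici _) KEPf_cont.continuousOn
  intro x hx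
  rw [interior_Ici, mem_Ioi] at hx
  rw [(KEPf_hasDeriv x).deriv, KEPderiv_factor]
  have hb2 : KEPb^2 < x^2 := by nlinarith [KEPb_gt]
  have ha2 : KEPa^2 < KEPb^2 := by rw [KEPa_sq, KEPb_sq]; linarith [KEPs_gt]
  have : (0:ℝ) < x^2 - KEPa^2 := by nlinarith
  nlinarith


/-- region classifier -/
noncomputable def KEPreg : ℝ → Fin 3 := fun x =>
  if x < -KEPb then 0 else if x < -KEPa then 1 else 2

lemma KEP_f_odd (x : ℝ) : KEPf (-x) = - KEPf x := by unfold KEPf; ring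


lemma KEP_reg_inj {R : ℝ} (hR : (12+8*KEPs)*KEPa/25 < R) {u v : ℝ}
    (hu : KEPf u = R) (hv : KEPf v = R) (h : KEPreg u = KEPreg v) : u = v := by
  have key : ∀ w : ℝ, KEPf w = R → ¬ w < -KEPa → KEPb < w := by
    intro w hw hwa
    by_contra hwb
    push_neg at hwa hwb
    have := f_bound' (by linarith) hwb
    rw [hw] at this; linarith
  unfold KEPreg at h
  split_ifs at h
  all_goals first
    | exact absurd h (by decide)
    | exact KEP_mono_left.injOn (le_of_lt ‹u < -KEPb›) (le_of_lt ‹v < -KEPb›) (hu.trans hv.symm)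
    | exact KEP_anti_mid.injOn ⟨not_lt.mp ‹¬ u < -KEPb›, le_of_lt ‹u < -KEPa›⟩
        ⟨not_lt.mp ‹¬ v < -KEPb›, le_of_lt ‹v < -KEPa›⟩ (hu.trans hv.symm)
    | exact KEP_mono_right.injOn (le_of_lt (key u hu ‹¬ u < -KEPa›))
        (le_of_lt (key v hv ‹¬ v < -KEPa›)) (hu.trans hv.symm)

lemma KEP_forward (R : ℝ)
    (H : ∀ z : ℂ, z ^ 5 - 4 * z ^ 3 + 3 * z - (R : ℂ) = 0 → z.im = 0) :
    R ≤ (12 + 8*KEPs)*KEPa/25 := by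
  by_contra hR
  push_neg at hR
  classical
  set P : Polynomial ℂ := X^5 - C 4 * X^3 + C 3 * X - C (R:ℂ) with hPdef
  have hPdeg : P.natDegree = 5 := by unfold P; compute_degree!
  have hP0 : P ≠ 0 := fun h => by simp [h] at hPdeg
  have hPeval : ∀ z : ℂ, P.eval z = z^5 - 4*z^3 + 3*z - (R:ℂ) := by
    intro z; simp [hPdef]
  have hroots : P.roots.card = 5 := by
    rw [← hPdeg]
    exact IsAlgClosed.card_roots_eq_natDegree
  have hreal : ∀ t ∈ P.roots, t.im = 0 ∧ KEPf t.re = R := by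
    intro t ht
    have he : t^5 - 4*t^3 + 3*t - (R:ℂ) = 0 := by
      rw [← hPeval]; exact Polynomial.isRoot_of_mem_roots ht
    have him := H t he
    refine ⟨him, ?_⟩
    have ht' : t = (t.re : ℂ) := Complex.ext rfl (by simp [him])
    rw [ht'] at he
    have h0 : ((t.re^5 - 4*t.re^3 + 3*t.re - R : ℝ) : ℂ) = 0 := by
      push_cast; linear_combination he
    have := Complex.ofReal_eq_zero.mp h0
    show t.re^5 - 4*t.re^3 + 3*t.re = R
    linarith
  -- derivatives
  have hPd : derivative P = C 5 * X^4 - C 12 * X^2 + C 3 := by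
    unfold P
    simp [derivative_X_pow]
    simp only [map_ofNat]
    ring
  have hPdd : derivative (derivative P) = C 20 * X^3 - C 24 * X := by
    rw [hPd]
    simp [derivative_X_pow]
    simp only [map_ofNat]
    ring
  -- count bound
  have hcount : ∀ t ∈ P.roots.toFinset,
      P.roots.count t ≤ 1 + (if t = ((-KEPb : ℝ):ℂ) then 1 else 0) := by
    intro t ht
    rw [Polynomial.count_roots]
    obtain ⟨him, hft⟩ := hreal t (Multiset.mem_toFinset.mp ht)
    have ht' : t = (t.re : ℂ) := Complex.ext rfl (by simp [him])
    by_contra hc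
    push_neg at hc
    split_ifs at hc with hcase
    · -- t = -b, multiplicity ≥ 3
      have h2 : 2 < P.rootMultiplicity t := hc
      have := (Polynomial.lt_rootMultiplicity_iff_isRoot_iterate_derivative hP0).mp h2 2 le_rfl
      rw [Function.iterate_succ, Function.iterate_one] at this
      rw [Function.comp_apply, hPdd] at this
      have he : (20 : ℂ) * t^3 - 24 * t = 0 := by
        simpa [IsRoot] using this
      rw [hcase] at he
      have h0 : (20:ℝ)*(-KEPb)^3 - 24*(-KEPb) = 0 := by exact_mod_cast he
      nlinarith [KEPb_gt, KEPs_gt, KEPb_sq, h0]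
    · -- t ≠ -b, multiplicity ≥ 2
      have h2 : 1 < P.rootMultiplicity t := hc
      have := (Polynomial.lt_rootMultiplicity_iff_isRoot_iterate_derivative hP0).mp h2 1 le_rfl
      rw [Function.iterate_one, hPd] at this
      have he : (5:ℂ) * t^4 - 12 * t^2 + 3 = 0 := by simpa [IsRoot] using this
      rw [ht'] at he
      have h0 : 5*t.re^4 - 12*t.re^2 + 3 = 0 := by
        have : ((5*t.re^4 - 12*t.re^2 + 3 : ℝ) : ℂ) = 0 := by push_cast; linear_combination he
        exact_mod_cast this
      -- so t.re ∈ {±a, ±b}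
      have hfac : 5*(t.re^2 - KEPa^2)*(t.re^2 - KEPb^2) = 0 := by
        rw [KEPa_sq, KEPb_sq]; linear_combination h0 - (1/5)*KEPs_sq
      have ha0 : 0 < KEPa := by linarith [KEPa_gt]
      have hb0 : 0 < KEPb := by linarith [KEPb_gt]
      have hcases : t.re = KEPa ∨ t.re = -KEPa ∨ t.re = KEPb ∨ t.re = -KEPb := by
        rcases mul_eq_zero.mp hfac with h' | h'
        · rcases mul_eq_zero.mp h' with h'' | h''
          · norm_num at h''
          · have : (t.re - KEPa)*(t.re + KEPa) = 0 := by linear_combination h''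
            rcases mul_eq_zero.mp this with h3 | h3
            · exact Or.inl (by linarith)
            · exact Or.inr (Or.inl (by linarith))
        · have : (t.re - KEPb)*(t.re + KEPb) = 0 := by linear_combination h'
          rcases mul_eq_zero.mp this with h3 | h3
          · exact Or.inr (Or.inr (Or.inl (by linarith)))
          · exact Or.inr (Or.inr (Or.inr (by linarith)))
      have hRK := RK_pos
      rcases hcases with h' | h' | h' | h'
      · rw [h', fa_eq] at hft; linarith
      · rw [h'] at hft; rw [KEP_f_odd, fa_eq] at hft; linarith
      · rw [h', fb_eq] at hft
        have : (12 - 8*KEPs)*KEPb/25 < 0 := by nlinarith [KEPs_gt, KEPb_gt]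
        linarith
      · exact hcase (by rw [ht', h'])
  -- cardinality of distinct roots ≥ 4
  have hsum : ∑ t ∈ P.roots.toFinset, P.roots.count t = 5 := by
    rw [Multiset.toFinset_sum_count_eq, hroots]
  have hTcard : 4 ≤ P.roots.toFinset.card := by
    have hb := Finset.sum_le_sum hcount
    rw [hsum] at hb
    rw [Finset.sum_add_distrib, Finset.sum_const, Finset.sum_ite_eq' P.roots.toFinset
      ((-KEPb : ℝ):ℂ) (fun _ => 1)] at hb
    split_ifs at hb <;> simp at hb <;> omega
  -- pigeonhole
  have hmaps : ∀ t ∈ P.roots.toFinset, KEPreg t.re ∈ (Finset.univ : Finset (Fin 3)) :=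
    fun _ _ => Finset.mem_univ _
  have hlt : (Finset.univ : Finset (Fin 3)).card < P.roots.toFinset.card := by
    simp only [Finset.card_univ, Fintype.card_fin]; omega
  obtain ⟨t1, ht1, t2, ht2, hne, heq⟩ :=
    Finset.exists_ne_map_eq_of_card_lt_of_maps_to hlt hmaps
  obtain ⟨him1, hf1⟩ := hreal t1 (Multiset.mem_toFinset.mp ht1)
  obtain ⟨him2, hf2⟩ := hreal t2 (Multiset.mem_toFinset.mp ht2)
  have := KEP_reg_inj hR hf1 hf2 heq
  exact hne (Complex.ext this (him1.trans him2.symm))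



lemma KEP_backward (R : ℝ)
    (h1 : -((12 + 8*KEPs)*KEPa/25) ≤ R) (h2 : R ≤ (12 + 8*KEPs)*KEPa/25) :
    ∀ z : ℂ, z ^ 5 - 4 * z ^ 3 + 3 * z - (R : ℂ) = 0 → z.im = 0 := by
  intro z hz
  by_contra him
  classical
  have ha0 : 0 < KEPa := by linarith [KEPa_gt]
  have hb0 : 0 < KEPb := by linarith [KEPb_gt]
  have hab : KEPa < KEPb := by linarith [KEPa_lt, KEPb_gt]
  have hM := M_gt
  have hRK := RK_pos
  have hRK2 := RK_lt2
  have hfnb : KEPf (-KEPb) = (8*KEPs - 12)*KEPb/25 := by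
    rw [KEP_f_odd, fb_eq]; ring
  have hfna : KEPf (-KEPa) = -((12 + 8*KEPs)*KEPa/25) := by
    rw [KEP_f_odd, fa_eq]
  have hf10 : KEPf (-10) = -96030 := by unfold KEPf; norm_num
  have hf10' : KEPf 10 = 96030 := by unfold KEPf; norm_num
  -- root 1 in (-10, -b)
  obtain ⟨x1, hx1m, hx1⟩ : ∃ x ∈ Ioo (-10 : ℝ) (-KEPb), KEPf x = R := by
    have := intermediate_value_Ioo (by linarith [KEPb_lt] : (-10:ℝ) ≤ -KEPb)
      KEPf_cont.continuousOn (a := -10) (b := -KEPb)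
    have hmem : R ∈ Ioo (KEPf (-10)) (KEPf (-KEPb)) := by
      rw [hf10, hfnb]; constructor <;> linarith
    obtain ⟨x, hxm, hx⟩ := this hmem
    exact ⟨x, hxm, hx⟩
  -- root 2 in (-b, -a]
  obtain ⟨x2, hx2m, hx2⟩ : ∃ x ∈ Ioc (-KEPb) (-KEPa), KEPf x = R := by
    have := intermediate_value_Ioc' (by linarith : (-KEPb:ℝ) ≤ -KEPa)
      KEPf_cont.continuousOn (a := -KEPb) (b := -KEPa)
    have hmem : R ∈ Ico (KEPf (-KEPa)) (KEPf (-KEPb)) := by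
      rw [hfna, hfnb]; constructor <;> linarith
    obtain ⟨x, hxm, hx⟩ := this hmem
    exact ⟨x, hxm, hx⟩
  -- root 3 in [a, b)
  obtain ⟨x3, hx3m, hx3⟩ : ∃ x ∈ Ico KEPa KEPb, KEPf x = R := by
    have := intermediate_value_Ico' (le_of_lt hab) KEPf_cont.continuousOn
      (a := KEPa) (b := KEPb)
    have hmem : R ∈ Ioc (KEPf KEPb) (KEPf KEPa) := by
      rw [fa_eq, fb_eq]; constructor <;> nlinarith
    obtain ⟨x, hxm, hx⟩ := this hmem
    exact ⟨x, hxm, hx⟩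
  -- root 4 in (b, 10]
  obtain ⟨x4, hx4m, hx4⟩ : ∃ x ∈ Ioc KEPb (10:ℝ), KEPf x = R := by
    have := intermediate_value_Ioc (by linarith [KEPb_lt] : (KEPb:ℝ) ≤ 10)
      KEPf_cont.continuousOn (a := KEPb) (b := 10)
    have hmem : R ∈ Ioc (KEPf KEPb) (KEPf 10) := by
      rw [fb_eq, hf10']; constructor <;> nlinarith
    obtain ⟨x, hxm, hx⟩ := this hmem
    exact ⟨x, hxm, hx⟩
  -- ordering
  have hord1 : x1 < -KEPb := hx1m.2
  have hord2 : -KEPb < x2 := hx2m.1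
  have hord3 : x2 ≤ -KEPa := hx2m.2
  have hord4 : KEPa ≤ x3 := hx3m.1
  have hord5 : x3 < KEPb := hx3m.2
  have hord6 : KEPb < x4 := hx4m.1
  -- the polynomial
  set P : Polynomial ℂ := X^5 - C 4 * X^3 + C 3 * X - C (R:ℂ) with hPdef
  have hPdeg : P.natDegree = 5 := by unfold P; compute_degree!
  have hPeval : ∀ w : ℂ, P.eval w = w^5 - 4*w^3 + 3*w - (R:ℂ) := by
    intro w; simp [hPdef]
  have hrootR : ∀ x : ℝ, KEPf x = R → ((x:ℂ) ∈ P.roots) := by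
    intro x hx
    rw [mem_roots (by intro h; simp [h] at hPdeg), IsRoot, hPeval]
    have : KEPf x - R = 0 := by rw [hx]; ring
    push_cast
    have := congrArg (fun r : ℝ => (r : ℂ)) this
    push_cast at this
    unfold KEPf at this
    push_cast at this
    linear_combination this
  have hzr : z ∈ P.roots := by
    rw [mem_roots (by intro h; simp [h] at hPdeg), IsRoot, hPeval]
    exact hz
  have hwr : (starRingEnd ℂ) z ∈ P.roots := by
    rw [mem_roots (by intro h; simp [h] at hPdeg), IsRoot, hPeval]
    have := congrArg (starRingEnd ℂ) hz
    simpa [map_ofNat] using this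
  -- six distinct roots
  have hzne : ∀ x : ℝ, z ≠ (x:ℂ) := by
    intro x h; exact him (by rw [h]; simp)
  have hwne : ∀ x : ℝ, (starRingEnd ℂ) z ≠ (x:ℂ) := by
    intro x h
    apply him
    have : ((starRingEnd ℂ) z).im = 0 := by rw [h]; simp
    simpa [neg_eq_zero] using this
  have hzw : z ≠ (starRingEnd ℂ) z := by
    intro h
    apply him
    have := congrArg Complex.im h
    simp at this
    linarith
  have hno : ([( x1:ℂ), (x2:ℂ), (x3:ℂ), (x4:ℂ), z, (starRingEnd ℂ) z] : List ℂ).Nodup := by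
    have e12 : x1 ≠ x2 := by intro h; rw [h] at hord1; linarith
    have e13 : x1 ≠ x3 := by intro h; rw [h] at hord1; linarith
    have e14 : x1 ≠ x4 := by intro h; rw [h] at hord1; linarith
    have e23 : x2 ≠ x3 := by intro h; rw [h] at hord3; linarith
    have e24 : x2 ≠ x4 := by intro h; rw [h] at hord3; linarith
    have e34 : x3 ≠ x4 := by intro h; rw [h] at hord5; linarith
    simp only [List.nodup_cons, List.mem_cons, List.mem_singleton, List.not_mem_nil,
      List.nodup_nil, and_true, not_or]
    refine ⟨⟨?_, ?_, ?_, ?_, ?_, not_false⟩, ⟨?_, ?_, ?_, ?_, not_false⟩,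
      ⟨?_, ?_, ?_, not_false⟩, ⟨?_, ?_, not_false⟩, ⟨hzw, not_false⟩, not_false⟩
    · exact_mod_cast e12
    · exact_mod_cast e13
    · exact_mod_cast e14
    · exact fun h => (hzne x1) h.symm
    · exact fun h => (hwne x1) h.symm
    · exact_mod_cast e23
    · exact_mod_cast e24
    · exact fun h => (hzne x2) h.symm
    · exact fun h => (hwne x2) h.symm
    · exact_mod_cast e34
    · exact fun h => (hzne x3) h.symm
    · exact fun h => (hwne x3) h.symm
    · exact fun h => (hzne x4) h.symm
    · exact fun h => (hwne x4) h.symm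
  set Z : Finset ℂ := ⟨([( x1:ℂ), (x2:ℂ), (x3:ℂ), (x4:ℂ), z, (starRingEnd ℂ) z] : List ℂ), hno⟩
    with hZdef
  have hZcard : Z.card = 6 := rfl
  have hsub : Z.val ⊆ P.roots := by
    intro c hc
    simp only [hZdef, Finset.mem_mk, Multiset.coe_mem, Multiset.mem_coe, List.mem_cons,
      List.mem_singleton, List.not_mem_nil] at hc
    rcases hc with h | h | h | h | h | h
    · rw [h]; exact hrootR x1 hx1
    · rw [h]; exact hrootR x2 hx2
    · rw [h]; exact hrootR x3 hx3
    · rw [h]; exact hrootR x4 hx4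
    · rw [h]; exact hzr
    · simp at h; rw [h]; exact hwr
  have := Polynomial.card_le_degree_of_subset_roots hsub
  rw [hZcard, hPdeg] at this
  omega


/-- all complex roots of `X⁵ − 4X³ + 3X − R` are real iff
`|R| ≤ R_KEP` with `R_KEP = ((12 + 8√21)/125)·√(30 − 5√21)`. -/
theorem quintic_all_roots_real_iff (R : ℝ) :
    (∀ z : ℂ, z ^ 5 - 4 * z ^ 3 + 3 * z - (R : ℂ) = 0 → z.im = 0) ↔
      |R| ≤ ((12 + 8 * Real.sqrt 21) / 125) * Real.sqrt (30 - 5 * Real.sqrt 21) := by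
  rw [RKEP_eq]
  constructor
  · intro H
    rw [abs_le]
    constructor
    · have H' : ∀ z : ℂ, z ^ 5 - 4 * z ^ 3 + 3 * z - ((-R : ℝ) : ℂ) = 0 → z.im = 0 := by
        intro z hzz
        have hz2 : (-z) ^ 5 - 4 * (-z) ^ 3 + 3 * (-z) - (R : ℂ) = 0 := by
          push_cast at hzz ⊢
          linear_combination -hzz
        have := H (-z) hz2
        simpa [neg_eq_zero] using this
      have := KEP_forward (-R) H'
      linarith
    · exact KEP_forward R H
  · intro h
    exact KEP_backward R (by linarith [(abs_le.mp h).1]) (abs_le.mp h).2
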